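/- If {v1, v2} ∈ D_u and {v3, v4} ∈ D_u are double-vertex dominators of u such that {v3, v4} does not dominate v1 and {v1, v2} does not dominate v4, then {v1, v4} ∈ D_u and {v2, v3} ∈ D_u. -/

import Mathlib

/-- A nonempty directed path `p` from `a` to `b` in the graph with edge relation `E`. -/
def IsPath {V : Type*} (E : V → V → Prop) (p : List V) (a b : V) : Prop :=
  p ≠ [] ∧ p.head? = some a ∧ p.getLast? = some b ∧ p.Chain' E

/-- `A` dominates `B` with respect to `root`: every path from a vertex of `B` to `root`
contains a vertex of `A`. -/
def Dominates {V : Type*} (E : V → V → Prop) (root : V) (A B : Set V) : Prop :=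
  ∀ b ∈ B, ∀ p : List V, IsPath E p b root → ∃ a ∈ A, a ∈ p

/-- `A` is a dominator of `B`: it dominates `B` and no proper subset `A \ {v}` does. -/
def IsDominator {V : Type*} (E : V → V → Prop) (root : V) (A B : Set V) : Prop :=
  Dominates E root A B ∧ ∀ v ∈ A, ¬ Dominates E root (A \ {v}) B

/-- `{v, w}` is a double-vertex dominator of `u`. -/
def DoubleDom {V : Type*} (E : V → V → Prop) (root : V) (u v w : V) : Prop :=
  v ≠ w ∧ Dominates E root {v, w} {u} ∧
    ¬ Dominates E root {v} {u} ∧ ¬ Dominates E root {w} {u}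

/-- The edge relation `E` is acyclic. -/
def Acyclic {V : Type*} (E : V → V → Prop) : Prop :=
  ∀ a b, E a b → ¬ Relation.ReflTransGen E b a

section Aux

variable {V : Type*} {E : V → V → Prop} {root u x : V}

private lemma head_mem_of_isPath {p : List V} {a b : V} (h : IsPath E p a b) : a ∈ p := by
  obtain ⟨hne, hh, -, -⟩ := h
  cases p with
  | nil => exact absurd rfl hne
  | cons c q => simp only [List.head?_cons, Option.some.injEq] at hh; subst hh; exact List.mem_cons_self

private lemma first_mem (P : V → Prop) (p : List V) (h : ∃ y ∈ p, P y) :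
    ∃ s y t, p = s ++ y :: t ∧ P y ∧ ∀ z ∈ s, ¬ P z := by
  classical
  induction p with
  | nil => simp at h
  | cons a p ih =>
    by_cases ha : P a
    · exact ⟨[], a, p, rfl, ha, by simp⟩
    · obtain ⟨y, hy, hPy⟩ := h
      rcases List.mem_cons.1 hy with rfl | hy
      · exact absurd hPy ha
      · obtain ⟨s, y, t, hst, hPy', hs⟩ := ih ⟨y, hy, hPy⟩
        refine ⟨a :: s, y, t, by rw [hst]; rfl, hPy', ?_⟩
        rintro z hz
        rcases List.mem_cons.1 hz with rfl | hz
        · exact ha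
        · exact hs z hz

private lemma last_mem (x : V) (p : List V) (h : x ∈ p) :
    ∃ s t, p = s ++ x :: t ∧ x ∉ t := by
  classical
  induction p with
  | nil => simp at h
  | cons a p ih =>
    by_cases hx : x ∈ p
    · obtain ⟨s, t, hst, ht⟩ := ih hx
      exact ⟨a :: s, t, by rw [hst]; rfl, ht⟩
    · rcases List.mem_cons.1 h with rfl | h'
      · exact ⟨[], p, rfl, hx⟩
      · exact absurd h' hx

private lemma isPath_suffix {s t : List V} (hp : IsPath E (s ++ x :: t) u root) :
    IsPath E (x :: t) x root := by
  obtain ⟨hne, hh, hl, hc⟩ := hp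
  refine ⟨by simp, by simp, ?_, ?_⟩
  · rwa [List.getLast?_append_of_ne_nil _ (List.cons_ne_nil _ _)] at hl
  · exact (List.isChain_append.1 hc).2.1

private lemma isPath_splice {s t q : List V}
    (hp : IsPath E (s ++ x :: t) u root) (hq : IsPath E q x root) :
    IsPath E (s ++ q) u root := by
  obtain ⟨hne, hh, hl, hc⟩ := hp
  obtain ⟨hne', hh', hl', hc'⟩ := hq
  refine ⟨by simp [hne'], ?_, ?_, ?_⟩
  · cases s with
    | nil =>
      simp only [List.nil_append, List.head?_cons, Option.some.injEq] at hh
      subst hh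
      simpa using hh'
    | cons a s' => simpa using hh
  · rw [List.getLast?_append_of_ne_nil _ hne']
    exact hl'
  · change List.IsChain E (s ++ x :: t) at hc; change List.IsChain E (s ++ q)
    rw [List.isChain_append] at hc ⊢
    refine ⟨hc.1, hc', ?_⟩
    intro a ha b hb
    rw [hh'] at hb
    cases hb
    exact hc.2.2 a ha x (by simp)

end Aux

theorem doubleDom_cross {V : Type*} [Fintype V] (E : V → V → Prop) (root : V)
    (hacyc : Acyclic E) (u v₁ v₂ v₃ v₄ : V)
    (h12 : DoubleDom E root u v₁ v₂) (h34 : DoubleDom E root u v₃ v₄)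
    (h1 : ¬ Dominates E root {v₃, v₄} {v₁})
    (h4 : ¬ Dominates E root {v₁, v₂} {v₄}) :
    DoubleDom E root u v₁ v₄ ∧ DoubleDom E root u v₂ v₃ := by
  classical
  obtain ⟨hne12, hdom12, hnd1, hnd2⟩ := h12
  obtain ⟨hne34, hdom34, hnd3, hnd4⟩ := h34
  -- membership form of domination
  have dom12 : ∀ p : List V, IsPath E p u root → v₁ ∈ p ∨ v₂ ∈ p := by
    intro p hp
    obtain ⟨a, ha, hap⟩ := hdom12 u rfl p hp
    rcases ha with rfl | ha
    · exact Or.inl hap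
    · rw [Set.mem_singleton_iff] at ha; subst ha; exact Or.inr hap
  have dom34 : ∀ p : List V, IsPath E p u root → v₃ ∈ p ∨ v₄ ∈ p := by
    intro p hp
    obtain ⟨a, ha, hap⟩ := hdom34 u rfl p hp
    rcases ha with rfl | ha
    · exact Or.inl hap
    · rw [Set.mem_singleton_iff] at ha; subst ha; exact Or.inr hap
  -- witnesses from single-vertex non-domination
  have notdom : ∀ x : V, ¬ Dominates E root {x} {u} →
      ∃ p, IsPath E p u root ∧ x ∉ p := by
    intro x hx
    unfold Dominates at hx
    push_neg at hx
    obtain ⟨b, hb, p, hp, hall⟩ := hx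
    rw [Set.mem_singleton_iff] at hb
    subst hb
    exact ⟨p, hp, hall x rfl⟩
  -- witness paths from pair non-domination
  have hP1 : ∃ p, IsPath E p v₁ root ∧ v₃ ∉ p ∧ v₄ ∉ p := by
    unfold Dominates at h1
    push_neg at h1
    obtain ⟨b, hb, p, hp, hall⟩ := h1
    rw [Set.mem_singleton_iff] at hb
    subst hb
    exact ⟨p, hp, hall v₃ (Or.inl rfl), hall v₄ (Or.inr rfl)⟩
  have hP4 : ∃ p, IsPath E p v₄ root ∧ v₁ ∉ p ∧ v₂ ∉ p := by
    unfold Dominates at h4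
    push_neg at h4
    obtain ⟨b, hb, p, hp, hall⟩ := h4
    rw [Set.mem_singleton_iff] at hb
    subst hb
    exact ⟨p, hp, hall v₁ (Or.inl rfl), hall v₂ (Or.inr rfl)⟩
  obtain ⟨P1, hP1p, hP1v3, hP1v4⟩ := hP1
  obtain ⟨P4, hP4p, hP4v1, hP4v2⟩ := hP4
  -- v₁ ≠ v₄ (also v₁ ≠ v₃, v₄ ≠ v₂)
  have h14 : v₁ ≠ v₄ := fun h => hP1v4 (h ▸ head_mem_of_isPath hP1p)
  -- L23 : every path from u to root meets v₂ or v₃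
  have L23 : ∀ p : List V, IsPath E p u root → v₂ ∈ p ∨ v₃ ∈ p := by
    intro p hp
    by_contra hcon
    push_neg at hcon
    obtain ⟨hpv2, hpv3⟩ := hcon
    have hv1p : v₁ ∈ p := (dom12 p hp).resolve_right hpv2
    have hv4p : v₄ ∈ p := (dom34 p hp).resolve_left hpv3
    -- first occurrence of v₄
    obtain ⟨s, y, t, hst, hy, hs⟩ := first_mem (v₄ = ·) p ⟨v₄, hv4p, rfl⟩
    subst hy
    rw [hst] at hp
    have hq : IsPath E (s ++ P4) u root := isPath_splice hp hP4p
    have hv1s : v₁ ∈ s := by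
      rcases dom12 _ hq with h | h
      · rcases List.mem_append.1 h with h | h
        · exact h
        · exact absurd h hP4v1
      · rcases List.mem_append.1 h with h | h
        · exact absurd (hst ▸ List.mem_append.2 (Or.inl h)) hpv2
        · exact absurd h hP4v2
    -- first occurrence of v₁
    obtain ⟨s', y', t', hst', hy', hs'⟩ := first_mem (v₁ = ·) p ⟨v₁, hv1p, rfl⟩
    subst hy'
    have hp' : IsPath E (s' ++ v₁ :: t') u root := hst' ▸ (hst ▸ hp : IsPath E p u root)
    have hq' : IsPath E (s' ++ P1) u root := isPath_splice hp' hP1p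
    have hv4s' : v₄ ∈ s' := by
      rcases dom34 _ hq' with h | h
      · rcases List.mem_append.1 h with h | h
        · exact absurd (hst' ▸ List.mem_append.2 (Or.inl h)) hpv3
        · exact absurd h hP1v3
      · rcases List.mem_append.1 h with h | h
        · exact h
        · exact absurd h hP1v4
    -- both s and s' are prefixes of p; derive contradiction
    have hpre : s <+: p := ⟨v₄ :: t, hst.symm⟩
    have hpre' : s' <+: p := ⟨v₁ :: t', hst'.symm⟩
    rcases List.prefix_or_prefix_of_prefix hpre hpre' with h | h
    · exact hs' v₁ (h.subset hv1s) rfl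
    · exact hs v₄ (h.subset hv4s') rfl
  -- v₂ ≠ v₃
  have h23 : v₂ ≠ v₃ := by
    obtain ⟨Q, hQ, hQv2⟩ := notdom v₂ hnd2
    intro h
    rcases L23 Q hQ with hc | hc
    · exact hQv2 hc
    · exact hQv2 (h ▸ hc)
  -- L14 : every path from u to root meets v₁ or v₄
  have L14 : ∀ p : List V, IsPath E p u root → v₁ ∈ p ∨ v₄ ∈ p := by
    intro p hp
    by_contra hcon
    push_neg at hcon
    obtain ⟨hpv1, hpv4⟩ := hcon
    have hv2p : v₂ ∈ p := (dom12 p hp).resolve_left hpv1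
    have hv3p : v₃ ∈ p := (dom34 p hp).resolve_right hpv4
    -- last occurrence of v₃ in p
    obtain ⟨s₃, t₃, hst₃, ht₃⟩ := last_mem v₃ p hv3p
    by_cases hB : v₂ ∈ t₃
    · -- Case B: an occurrence of v₂ after the last v₃; get S2 : path v₂ → root avoiding v₃, v₄
      obtain ⟨a, b, hab, -⟩ := last_mem v₂ t₃ hB
      have hp2 : IsPath E ((s₃ ++ v₃ :: a) ++ v₂ :: b) u root := by
        rw [hst₃, hab] at hp
        simpa using hp
      have hS2 : IsPath E (v₂ :: b) v₂ root := isPath_suffix hp2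
      have hS2v3 : v₃ ∉ (v₂ :: b : List V) := by
        intro h
        rcases List.mem_cons.1 h with h | h
        · exact h23 h.symm
        · exact ht₃ (hab ▸ List.mem_append.2 (Or.inr (List.mem_cons.2 (Or.inr h))))
      have hS2v4 : v₄ ∉ (v₂ :: b : List V) := by
        intro h
        apply hpv4
        rw [hst₃, hab]
        exact List.mem_append.2 (Or.inr (List.mem_cons.2 (Or.inr
          (List.mem_append.2 (Or.inr h)))))
      -- take a path avoiding v₃
      obtain ⟨Q, hQ, hQv3⟩ := notdom v₃ hnd3
      have hv4Q : v₄ ∈ Q := (dom34 Q hQ).resolve_left hQv3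
      obtain ⟨s, y, t, hQst, hy, hsnone⟩ :=
        first_mem (fun z => v₁ = z ∨ v₂ = z ∨ v₄ = z) Q ⟨v₄, hv4Q, Or.inr (Or.inr rfl)⟩
      rw [hQst] at hQ
      have hsv1 : v₁ ∉ s := fun h => hsnone v₁ h (Or.inl rfl)
      have hsv2 : v₂ ∉ s := fun h => hsnone v₂ h (Or.inr (Or.inl rfl))
      have hsv4 : v₄ ∉ s := fun h => hsnone v₄ h (Or.inr (Or.inr rfl))
      have hsv3 : v₃ ∉ s := fun h => hQv3 (hQst ▸ List.mem_append.2 (Or.inl h))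
      rcases hy with rfl | rfl | rfl
      · -- y = v₁ : splice with P1, avoid v₃, v₄ : contradicts dom34
        have hq := isPath_splice hQ hP1p
        rcases dom34 _ hq with h | h
        · rcases List.mem_append.1 h with h | h
          · exact hsv3 h
          · exact hP1v3 h
        · rcases List.mem_append.1 h with h | h
          · exact hsv4 h
          · exact hP1v4 h
      · -- y = v₂ : splice with S2, avoid v₃, v₄ : contradicts dom34
        have hq := isPath_splice hQ hS2
        rcases dom34 _ hq with h | h
        · rcases List.mem_append.1 h with h | h
          · exact hsv3 h
          · exact hS2v3 h
        · rcases List.mem_append.1 h with h | h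
          · exact hsv4 h
          · exact hS2v4 h
      · -- y = v₄ : splice with P4, avoid v₁, v₂ : contradicts dom12
        have hq := isPath_splice hQ hP4p
        rcases dom12 _ hq with h | h
        · rcases List.mem_append.1 h with h | h
          · exact hsv1 h
          · exact hP4v1 h
        · rcases List.mem_append.1 h with h | h
          · exact hsv2 h
          · exact hP4v2 h
    · -- Case A: no v₂ after the last v₃; get S3 : path v₃ → root avoiding v₁, v₂
      have hp3 : IsPath E (s₃ ++ v₃ :: t₃) u root := hst₃ ▸ hp
      have hS3 : IsPath E (v₃ :: t₃) v₃ root := isPath_suffix hp3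
      have hS3v1 : v₁ ∉ (v₃ :: t₃ : List V) := by
        intro h
        exact hpv1 (hst₃ ▸ List.mem_append.2 (Or.inr h))
      have hS3v2 : v₂ ∉ (v₃ :: t₃ : List V) := by
        intro h
        rcases List.mem_cons.1 h with h | h
        · exact h23 h
        · exact hB h
      -- take a path avoiding v₂
      obtain ⟨Q, hQ, hQv2⟩ := notdom v₂ hnd2
      have hv1Q : v₁ ∈ Q := (dom12 Q hQ).resolve_right hQv2
      obtain ⟨s, y, t, hQst, hy, hsnone⟩ :=
        first_mem (fun z => v₁ = z ∨ v₃ = z ∨ v₄ = z) Q ⟨v₁, hv1Q, Or.inl rfl⟩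
      rw [hQst] at hQ
      have hsv1 : v₁ ∉ s := fun h => hsnone v₁ h (Or.inl rfl)
      have hsv3 : v₃ ∉ s := fun h => hsnone v₃ h (Or.inr (Or.inl rfl))
      have hsv4 : v₄ ∉ s := fun h => hsnone v₄ h (Or.inr (Or.inr rfl))
      have hsv2 : v₂ ∉ s := fun h => hQv2 (hQst ▸ List.mem_append.2 (Or.inl h))
      rcases hy with rfl | rfl | rfl
      · -- y = v₁ : splice with P1, avoid v₃, v₄ : contradicts dom34
        have hq := isPath_splice hQ hP1p
        rcases dom34 _ hq with h | h
        · rcases List.mem_append.1 h with h | h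
          · exact hsv3 h
          · exact hP1v3 h
        · rcases List.mem_append.1 h with h | h
          · exact hsv4 h
          · exact hP1v4 h
      · -- y = v₃ : splice with S3, avoid v₁, v₂ : contradicts dom12
        have hq := isPath_splice hQ hS3
        rcases dom12 _ hq with h | h
        · rcases List.mem_append.1 h with h | h
          · exact hsv1 h
          · exact hS3v1 h
        · rcases List.mem_append.1 h with h | h
          · exact hsv2 h
          · exact hS3v2 h
      · -- y = v₄ : splice with P4, avoid v₁, v₂ : contradicts dom12
        have hq := isPath_splice hQ hP4p
        rcases dom12 _ hq with h | h
        · rcases List.mem_append.1 h with h | h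
          · exact hsv1 h
          · exact hP4v1 h
        · rcases List.mem_append.1 h with h | h
          · exact hsv2 h
          · exact hP4v2 h
  -- assemble the two double dominators
  constructor
  · refine ⟨h14, ?_, hnd1, hnd4⟩
    intro b hb p hp
    rw [Set.mem_singleton_iff] at hb
    subst hb
    rcases L14 p hp with h | h
    · exact ⟨v₁, Or.inl rfl, h⟩
    · exact ⟨v₄, Or.inr rfl, h⟩
  · refine ⟨h23, ?_, hnd2, hnd3⟩
    intro b hb p hp
    rw [Set.mem_singleton_iff] at hb
    subst hb
    rcases L23 p hp with h | h
    · exact ⟨v₂, Or.inl rfl, h⟩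
    · exact ⟨v₃, Or.inr rfl, h⟩
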